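/- Let n ≥ 1 and let A ∈ ℝ^{n×n} be a symmetric {0,1}-valued matrix with zero diagonal. Suppose P ∈ {-1,1}^{k×n} and a diagonal matrix W ∈ ℝ^{k×k} satisfy PᵀWP ⊙ J = A, let r be the number of nonzero diagonal entries of W, and assume r > 1 and that W is L0-optimal: for every k' ≥ 1, every P' ∈ {-1,1}^{k'×n} and diagonal W' ∈ ℝ^{k'×k'} with P'ᵀW'P' ⊙ J = A, the number of nonzero diagonal entries of W' is at least r. Then every diagonal entry of W satisfies |W_{a,a}| ≤ r · (r − 1)^{(r+1)/2}. -/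

import Mathlib

open Matrix

/-- The intrinsic coupling matrix `J` with `J i j = 1` for `i ≠ j` and `0` on the diagonal. -/
def Jmat (n : ℕ) : Matrix (Fin n) (Fin n) ℝ :=
  fun i j => if i = j then 0 else 1

/-- `A` is constructible in `k` pulses: there are `P ∈ {-1,1}^{k×n}` and a diagonal
`W ∈ ℝ^{k×k}` with `Pᵀ W P ⊙ J = A`. -/
def Constructible (n k : ℕ) (A : Matrix (Fin n) (Fin n) ℝ) : Prop :=
  ∃ (P : Matrix (Fin k) (Fin n) ℝ) (W : Matrix (Fin k) (Fin k) ℝ),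
    (∀ a i, P a i = 1 ∨ P a i = -1) ∧ W.IsDiag ∧
      (Pᵀ * W * P).hadamard (Jmat n) = A

/-- Hadamard's determinant inequality (weak form): a real `m × m` matrix with entries
bounded by `1` in absolute value has `|det| ≤ (√m)^m`. -/
lemma hadamard_det_le {m : ℕ} (B : Matrix (Fin m) (Fin m) ℝ) (h : ∀ i j, |B i j| ≤ 1) :
    |B.det| ≤ Real.sqrt m ^ m := by
  classical
  haveI h1 : WellFoundedLT (Fin m) := inferInstance
  have hfin : Module.finrank ℝ (EuclideanSpace ℝ (Fin m)) = Fintype.card (Fin m) :=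
    finrank_euclideanSpace
  set f : Fin m → EuclideanSpace ℝ (Fin m) :=
    (fun i => (WithLp.equiv 2 (Fin m → ℝ)).symm (B i)) with hfdef
  set e := EuclideanSpace.basisFun (Fin m) ℝ with he
  set b : OrthonormalBasis (Fin m) ℝ (EuclideanSpace ℝ (Fin m)) :=
    @InnerProductSpace.gramSchmidtOrthonormalBasis ℝ (EuclideanSpace ℝ (Fin m)) inferInstance inferInstance
    inferInstance (Fin m) inferInstance inferInstance h1 inferInstance inferInstance
    hfin f with hb
  have hdetB : e.toBasis.toMatrix f = Bᵀ := by
    ext i j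
    rw [Module.Basis.toMatrix_apply]
    rfl
  have h2 : e.toBasis.det f = B.det := by
    rw [Module.Basis.det_apply, hdetB, det_transpose]
  have h3 : e.toBasis.toMatrix b.toBasis * b.toBasis.toMatrix f = e.toBasis.toMatrix f :=
    Module.Basis.toMatrix_mul_toMatrix (b := e.toBasis) (b' := b.toBasis) f
  have h4 : |B.det| = |b.toBasis.det f| := by
    have := congrArg Matrix.det h3
    rw [det_mul] at this
    rw [← h2, Module.Basis.det_apply, ← this, abs_mul, ← Module.Basis.det_apply, ← Module.Basis.det_apply]
    rcases e.det_to_matrix_orthonormalBasis_real b with h5 | h5 <;>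
      simp [OrthonormalBasis.coe_toBasis, h5]
  have h6 : b.toBasis.det f = ∏ i, inner (𝕜 := ℝ) (b i) (f i) := by
    rw [hb]
    exact InnerProductSpace.gramSchmidtOrthonormalBasis_det hfin f
  have h7 : ∀ i, |inner (𝕜 := ℝ) (b i) (f i)| ≤ Real.sqrt m := by
    intro i
    calc |inner (𝕜 := ℝ) (b i) (f i)| ≤ ‖b i‖ * ‖f i‖ := abs_real_inner_le_norm _ _
    _ ≤ 1 * Real.sqrt m := by
        apply mul_le_mul
        · exact le_of_eq (b.orthonormal.1 i)
        · rw [EuclideanSpace.norm_eq]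
          apply Real.sqrt_le_sqrt
          calc ∑ j, ‖f i j‖ ^ 2 ≤ ∑ _j : Fin m, (1:ℝ) := by
                apply Finset.sum_le_sum
                intro j _
                have := h i j
                have : ‖f i j‖ ≤ 1 := by simpa [hfdef, Real.norm_eq_abs] using this
                nlinarith [norm_nonneg (f i j)]
          _ = m := by simp
        · exact norm_nonneg _
        · norm_num
    _ = Real.sqrt m := one_mul _
  rw [h4, h6]
  calc |∏ i, inner (𝕜 := ℝ) (b i) (f i)| = ∏ i, |inner (𝕜 := ℝ) (b i) (f i)| := by
        rw [Finset.abs_prod]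
  _ ≤ ∏ _i : Fin m, Real.sqrt m := Finset.prod_le_prod (fun i _ => abs_nonneg _) (fun i _ => h7 i)
  _ = Real.sqrt m ^ m := by simp

/-- A linearly independent family of `r` vectors in `D → ℝ` admits `r` coordinates on which the
corresponding square matrix has nonzero determinant. -/
lemma exists_det_ne_zero {D : Type*} [Fintype D] :
    ∀ {r : ℕ} (v : Fin r → D → ℝ), LinearIndependent ℝ v →
      ∃ φ : Fin r → D, (Matrix.of fun a b => v a (φ b)).det ≠ 0 := by
  intro r
  induction r with
  | zero =>
    intro v _
    exact ⟨Fin.elim0, by simp [Matrix.det_fin_zero]⟩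
  | succ m ih =>
    intro v hv
    obtain ⟨φ, hφ⟩ := ih (v ∘ Fin.succ) (hv.comp Fin.succ (Fin.succ_injective m))
    by_contra hcon
    push_neg at hcon
    set c : Fin (m + 1) → ℝ :=
      fun a => (-1 : ℝ) ^ (a : ℕ) *
        (Matrix.of fun a' b => v (a.succAbove a') (φ b) : Matrix (Fin m) (Fin m) ℝ).det with hc
    have hc0 : c 0 = (Matrix.of fun a b => (v ∘ Fin.succ) a (φ b) : Matrix (Fin m) (Fin m) ℝ).det := by
      simp [hc, Fin.succAbove_zero, Function.comp]
    have hsum : ∀ d : D, ∑ a, c a * v a d = 0 := by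
      intro d
      have hd := hcon (Fin.cons d φ)
      rw [Matrix.det_succ_column_zero] at hd
      rw [← hd]
      apply Finset.sum_congr rfl
      intro a _
      have hsub : ((Matrix.of fun a b => v a ((Fin.cons d φ : Fin (m+1) → D) b) : Matrix (Fin (m+1)) (Fin (m+1)) ℝ).submatrix a.succAbove Fin.succ)
          = Matrix.of fun a' b => v (a.succAbove a') (φ b) := by
        ext a' b
        simp [Matrix.submatrix_apply, Fin.cons_succ]
      rw [hsub]
      simp only [hc, Matrix.of_apply, Fin.cons_zero]
      ring
    have hall : ∀ a, c a = 0 := by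
      apply Fintype.linearIndependent_iff.mp hv c
      funext d
      simpa [Finset.sum_apply] using hsum d
    have := hall 0
    rw [hc0] at this
    exact hφ this

lemma entry_hadamard {n k : ℕ} (P : Matrix (Fin k) (Fin n) ℝ) (d : Fin k → ℝ) (i j : Fin n) :
    ((Pᵀ * Matrix.diagonal d * P).hadamard (Jmat n)) i j
      = if i = j then 0 else ∑ b, d b * (P b i * P b j) := by
  by_cases h : i = j
  · simp [Matrix.hadamard_apply, Jmat, h]
  · simp only [Matrix.hadamard_apply, Jmat, if_neg h, mul_one]
    rw [Matrix.mul_apply]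
    apply Finset.sum_congr rfl
    intro b _
    rw [Matrix.mul_diagonal, Matrix.transpose_apply]
    ring

theorem stmt_13 (n k : ℕ) (hn : 1 ≤ n)
    (A : Matrix (Fin n) (Fin n) ℝ) (hAs : A.IsSymm) (hAd : ∀ i, A i i = 0)
    (h01 : ∀ i j : Fin n, A i j = 0 ∨ A i j = 1)
    (P : Matrix (Fin k) (Fin n) ℝ) (hP : ∀ a i, P a i = 1 ∨ P a i = -1)
    (W : Matrix (Fin k) (Fin k) ℝ) (hWd : W.IsDiag)
    (hEq : (Pᵀ * W * P).hadamard (Jmat n) = A)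
    (r : ℕ) (hr : r = (Finset.univ.filter fun a : Fin k => W a a ≠ 0).card)
    (hr1 : 1 < r)
    (hopt : ∀ k' : ℕ, 1 ≤ k' → ∀ P' : Matrix (Fin k') (Fin n) ℝ,
      (∀ a i, P' a i = 1 ∨ P' a i = -1) → ∀ W' : Matrix (Fin k') (Fin k') ℝ,
      W'.IsDiag → (P'ᵀ * W' * P').hadamard (Jmat n) = A →
      r ≤ (Finset.univ.filter fun a : Fin k' => W' a a ≠ 0).card) :
    ∀ a : Fin k, |W a a| ≤ (r : ℝ) * ((r : ℝ) - 1) ^ (((r : ℝ) + 1) / 2) := by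
  classical
  intro a₀
  have hk : 1 ≤ k := a₀.pos
  set S : Finset (Fin k) := Finset.univ.filter (fun b : Fin k => W b b ≠ 0) with hSdef
  -- trivial case : zero weight
  have hRHSpos : (0:ℝ) ≤ (r : ℝ) * ((r : ℝ) - 1) ^ (((r : ℝ) + 1) / 2) := by
    apply mul_nonneg (by positivity)
    apply Real.rpow_nonneg
    have : (2:ℝ) ≤ (r:ℝ) := by exact_mod_cast hr1
    linarith
  by_cases ha₀ : W a₀ a₀ = 0
  · rw [ha₀]; simpa using hRHSpos
  -- the key off-diagonal identity
  have hWdiag : W = Matrix.diagonal (fun b => W b b) := by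
    ext i j
    by_cases h : i = j
    · subst h; simp
    · rw [Matrix.diagonal_apply_ne _ h]
      exact hWd h
  have key : ∀ i j : Fin n, i ≠ j → ∑ b, W b b * (P b i * P b j) = A i j := by
    intro i j hij
    have := congrFun (congrFun hEq i) j
    rw [hWdiag, entry_hadamard, if_neg hij] at this
    exact this
  -- indexing of the support
  have hrS : r = S.card := hr
  set emb : Fin r → Fin k := fun a => (S.equivFin.symm (Fin.cast hrS a) : Fin k) with hembdef
  have hembmem : ∀ a, emb a ∈ S := fun a => (S.equivFin.symm (Fin.cast hrS a)).2
  have hembinj : Function.Injective emb := by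
    intro x y hxy
    have := S.equivFin.symm.injective (Subtype.ext hxy)
    exact Fin.cast_injective hrS this
  have hsum_reindex : ∀ g : Fin k → ℝ, (∀ b ∉ S, g b = 0) →
      ∑ b, g b = ∑ a : Fin r, g (emb a) := by
    intro g hg
    rw [← Finset.sum_subset (Finset.subset_univ S) (fun b _ hb => hg b hb)]
    rw [← Finset.sum_coe_sort S g]
    rw [← Equiv.sum_comp (S.equivFin.symm) (fun x => g x)]
    exact (Equiv.sum_comp (finCongr hrS) _).symm
  -- the pair type and the pulse vectors
  set D := {p : Fin n × Fin n // p.1 ≠ p.2} with hDdef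
  set v : Fin r → D → ℝ := fun a p => P (emb a) p.1.1 * P (emb a) p.1.2 with hvdef
  have key2 : ∀ p : D, ∑ a : Fin r, W (emb a) (emb a) * v a p = A p.1.1 p.1.2 := by
    intro p
    rw [← hsum_reindex (fun b => W b b * (P b p.1.1 * P b p.1.2))]
    · exact key p.1.1 p.1.2 p.2
    · intro b hb
      have : W b b = 0 := by
        by_contra hne
        exact hb (Finset.mem_filter.mpr ⟨Finset.mem_univ b, hne⟩)
      rw [this, zero_mul]
  -- linear independence from optimality
  have hvind : LinearIndependent ℝ v := by
    rw [Fintype.linearIndependent_iff]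
    intro c hc
    by_contra hcon
    push_neg at hcon
    obtain ⟨a1, ha1⟩ := hcon
    set t : ℝ := W (emb a1) (emb a1) / c a1 with htdef
    set c' : Fin k → ℝ := fun b => if h : ∃ a, emb a = b then c h.choose else 0 with hc'def
    have hc'emb : ∀ a, c' (emb a) = c a := by
      intro a
      have hex : ∃ a', emb a' = emb a := ⟨a, rfl⟩
      rw [hc'def]
      simp only [dif_pos hex]
      congr 1
      exact hembinj hex.choose_spec
    have hc'zero : ∀ b ∉ S, c' b = 0 := by
      intro b hb
      rw [hc'def]
      simp only
      rw [dif_neg]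
      rintro ⟨a, rfl⟩
      exact hb (hembmem a)
    set d' : Fin k → ℝ := fun b => W b b - t * c' b with hd'def
    have hcsum : ∀ p : D, ∑ a : Fin r, c a * v a p = 0 := by
      intro p
      have := congrFun hc p
      simpa [Finset.sum_apply] using this
    have hW'A : (Pᵀ * Matrix.diagonal d' * P).hadamard (Jmat n) = A := by
      ext i j
      rw [entry_hadamard]
      by_cases h : i = j
      · rw [if_pos h, h, hAd]
      · rw [if_neg h]
        have expand : ∀ b, d' b * (P b i * P b j)
            = W b b * (P b i * P b j) - t * (c' b * (P b i * P b j)) := by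
          intro b; rw [hd'def]; ring
        rw [Finset.sum_congr rfl (fun b _ => expand b), Finset.sum_sub_distrib, ← Finset.mul_sum]
        have hz : ∑ b, c' b * (P b i * P b j) = 0 := by
          rw [hsum_reindex (fun b => c' b * (P b i * P b j))
            (fun b hb => by simp [hc'zero b hb])]
          calc ∑ a : Fin r, c' (emb a) * (P (emb a) i * P (emb a) j)
              = ∑ a : Fin r, c a * v a ⟨(i, j), h⟩ := by
                apply Finset.sum_congr rfl
                intro a _
                rw [hc'emb a]
          _ = 0 := hcsum ⟨(i, j), h⟩
        rw [hz, mul_zero, sub_zero]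
        exact key i j h
    have hsupp : (Finset.univ.filter fun b : Fin k => Matrix.diagonal d' b b ≠ 0)
        ⊆ S.erase (emb a1) := by
      intro b hb
      rw [Finset.mem_filter, Matrix.diagonal_apply_eq] at hb
      apply Finset.mem_erase.mpr
      constructor
      · rintro rfl
        apply hb.2
        rw [hd'def]
        simp only
        rw [hc'emb a1, htdef, div_mul_cancel₀ _ ha1, sub_self]
      · by_contra hbS
        apply hb.2
        have hWb : W b b = 0 := by
          by_contra hne
          exact hbS (Finset.mem_filter.mpr ⟨Finset.mem_univ b, hne⟩)
        rw [hd'def]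
        simp only
        rw [hWb, hc'zero b hbS, mul_zero, sub_zero]
    have hcard := hopt k hk P hP (Matrix.diagonal d') (Matrix.isDiag_diagonal d') hW'A
    have hcard2 : (Finset.univ.filter fun b : Fin k => Matrix.diagonal d' b b ≠ 0).card
        ≤ r - 1 := by
      calc _ ≤ (S.erase (emb a1)).card := Finset.card_le_card hsupp
      _ = S.card - 1 := Finset.card_erase_of_mem (hembmem a1)
      _ = r - 1 := by rw [hrS]
    omega
  -- choose a nonsingular square subsystem
  obtain ⟨φ, hφ⟩ := exists_det_ne_zero v hvind
  set N : Matrix (Fin r) (Fin r) ℝ := Matrix.of fun b a => v a (φ b) with hNdef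
  have hNdet : N.det ≠ 0 := by
    have : N = (Matrix.of fun a b => v a (φ b))ᵀ := by ext i j; rfl
    rw [this, Matrix.det_transpose]
    exact hφ
  have hNentry : ∀ b a, N b a = 1 ∨ N b a = -1 := by
    intro b a
    rw [hNdef]
    simp only [Matrix.of_apply, hvdef]
    rcases hP (emb a) (φ b).1.1 with h1 | h1 <;> rcases hP (emb a) (φ b).1.2 with h2 | h2 <;>
      rw [h1, h2] <;> norm_num
  -- the weight vector solves the square system
  set wvec : Fin r → ℝ := fun a => W (emb a) (emb a) with hwdef
  set bvec : Fin r → ℝ := fun b => A (φ b).1.1 (φ b).1.2 with hbdef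
  have hmv : N.mulVec wvec = bvec := by
    funext b
    rw [Matrix.mulVec, dotProduct]
    calc ∑ a, N b a * wvec a = ∑ a, W (emb a) (emb a) * v a (φ b) := by
          apply Finset.sum_congr rfl; intro a _; rw [hNdef]; simp only [Matrix.of_apply]; ring
    _ = bvec b := key2 (φ b)
  have hcramer : ∀ a, N.det * wvec a = ∑ b, N.adjugate a b * bvec b := by
    intro a
    have : N.adjugate.mulVec bvec = N.det • wvec := by
      rw [← hmv, Matrix.mulVec_mulVec, Matrix.adjugate_mul, Matrix.smul_mulVec,
        Matrix.one_mulVec]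
    have h2 := congrFun this a
    simp only [Matrix.mulVec, dotProduct, Pi.smul_apply, smul_eq_mul] at h2
    rw [← h2]
  -- integrality : |det N| ≥ 1
  set Nz : Matrix (Fin r) (Fin r) ℤ := fun b a => if N b a = 1 then 1 else -1 with hNzdef
  have hNzmap : Nz.map (fun z : ℤ => (z : ℝ)) = N := by
    ext b a
    rw [Matrix.map_apply]
    show ((if N b a = 1 then (1:ℤ) else -1 : ℤ) : ℝ) = N b a
    split_ifs with hif
    · rw [hif]; norm_num
    · rcases hNentry b a with h | h
      · exact absurd h hif
      · rw [h]; norm_num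
  have hNdetint : N.det = ((Nz.det : ℤ) : ℝ) := by
    rw [← hNzmap]
    exact (RingHom.map_det (Int.castRingHom ℝ) Nz).symm
  have hdet1 : (1:ℝ) ≤ |N.det| := by
    rw [hNdetint]
    have hz : Nz.det ≠ 0 := by
      intro h
      rw [hNdetint, h] at hNdet
      exact hNdet (by norm_num)
    calc (1:ℝ) = ((1:ℤ):ℝ) := by norm_num
    _ ≤ ((|Nz.det| : ℤ) : ℝ) := by exact_mod_cast Int.one_le_abs hz
    _ = |((Nz.det : ℤ) : ℝ)| := by push_cast; ring
  -- r = m + 1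
  obtain ⟨m, rfl⟩ : ∃ m, r = m + 1 := ⟨r - 1, by omega⟩
  have hm1 : 1 ≤ m := by omega
  -- adjugate entries are bounded by Hadamard
  have hadj : ∀ a b, |N.adjugate a b| ≤ Real.sqrt m ^ m := by
    intro a b
    rw [Matrix.adjugate_apply]
    rw [Matrix.det_succ_row _ b]
    rw [Finset.sum_eq_single a]
    · simp only [Matrix.updateRow_self, Pi.single_eq_same, mul_one]
      rw [abs_mul, abs_pow, abs_neg, abs_one, one_pow, one_mul]
      apply hadamard_det_le
      intro i j
      rw [Matrix.submatrix_apply, Matrix.updateRow_ne (Fin.succAbove_ne b i)]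
      rcases hNentry (b.succAbove i) (a.succAbove j) with h | h <;> rw [h] <;> norm_num
    · intro l _ hl
      rw [Matrix.updateRow_self, Pi.single_eq_of_ne hl, mul_zero, zero_mul]
    · intro h
      exact absurd (Finset.mem_univ a) h
  -- final bound
  obtain ⟨a, rfl⟩ : ∃ a : Fin (m+1), emb a = a₀ := by
    have ha₀S : a₀ ∈ S := Finset.mem_filter.mpr ⟨Finset.mem_univ a₀, ha₀⟩
    refine ⟨Fin.cast hrS.symm (S.equivFin ⟨a₀, ha₀S⟩), ?_⟩
    rw [hembdef]
    simp
  have hb01 : ∀ b, |bvec b| ≤ 1 := by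
    intro b
    rw [hbdef]
    rcases h01 (φ b).1.1 (φ b).1.2 with h | h <;> simp [h]
  have step1 : |W (emb a) (emb a)| ≤ ((m:ℝ) + 1) * Real.sqrt m ^ m := by
    have h1 : |W (emb a) (emb a)| ≤ |N.det * wvec a| := by
      rw [abs_mul]
      nlinarith [abs_nonneg (wvec a), abs_nonneg (N.det), hdet1,
        (by rw [hwdef] : wvec a = W (emb a) (emb a))]
    calc |W (emb a) (emb a)| ≤ |N.det * wvec a| := h1
    _ = |∑ b, N.adjugate a b * bvec b| := by rw [hcramer a]
    _ ≤ ∑ b, |N.adjugate a b * bvec b| := Finset.abs_sum_le_sum_abs _ _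
    _ ≤ ∑ _b : Fin (m+1), Real.sqrt m ^ m * 1 := by
        apply Finset.sum_le_sum
        intro b _
        rw [abs_mul]
        apply mul_le_mul (hadj a b) (hb01 b) (abs_nonneg _) (by positivity)
    _ = ((m:ℝ) + 1) * Real.sqrt m ^ m := by
        rw [Finset.sum_const, Finset.card_univ, Fintype.card_fin, nsmul_eq_mul]
        push_cast
        ring
  -- convert to the rpow bound
  have hcast : ((m+1 : ℕ) : ℝ) - 1 = (m : ℝ) := by push_cast; ring
  have step2 : Real.sqrt m ^ m ≤ ((m:ℝ)) ^ ((((m+1:ℕ):ℝ) + 1) / 2) := by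
    have hm0 : (0:ℝ) ≤ m := by positivity
    have hsq : Real.sqrt m ^ m = (m:ℝ) ^ ((m:ℝ) / 2) := by
      rw [Real.sqrt_eq_rpow, ← Real.rpow_natCast ((m:ℝ) ^ ((1:ℝ)/2)) m, ← Real.rpow_mul hm0]
      congr 1
      ring
    rw [hsq]
    apply Real.rpow_le_rpow_of_exponent_le
    · exact_mod_cast hm1
    · push_cast
      linarith
  calc |W (emb a) (emb a)| ≤ ((m:ℝ) + 1) * Real.sqrt m ^ m := step1
  _ ≤ ((m:ℝ) + 1) * ((m:ℝ)) ^ ((((m+1:ℕ):ℝ) + 1) / 2) := by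
      apply mul_le_mul_of_nonneg_left step2 (by positivity)
  _ = ((m+1:ℕ) : ℝ) * (((m+1:ℕ):ℝ) - 1) ^ ((((m+1:ℕ):ℝ) + 1) / 2) := by
      rw [hcast]; push_cast; ring
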